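/- Let n = 2 and d ≥ 4, and fix 6 ≤ r ≤ d+1. The set of r monomials {x_0^d, x_1^d, x_2^d} ∪ { x_0^{d-r+3} x_1 x_2 · m : m ∈ {x_0^{r-5}, x_0^{r-6}x_1, …, x_0 x_1^{r-6}, x_1^{r-5}, x_2^{r-5}} } consists of exactly r distinct monomials of degree d, and these monomials are k-linearly dependent modulo the linear form x_0 + x_1 + x_2 (char k = 0). -/

import Mathlib

open MvPolynomial

set_option maxHeartbeats 1000000 in
theorem stmt_10 (k : Type*) [Field k] [CharZero k] (d r : ℕ)
    (hd : 4 ≤ d) (hr : 6 ≤ r) (hrd : r ≤ d + 1) :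
    ∀ F : Fin r → MvPolynomial (Fin 3) k,
      (F = fun j : Fin r =>
        if (j : ℕ) = 0 then X 0 ^ d
        else if (j : ℕ) = 1 then X 1 ^ d
        else if (j : ℕ) = 2 then X 2 ^ d
        else if (j : ℕ) < r - 1 then
          X 0 ^ (d - 2 - ((j : ℕ) - 3)) * X 1 ^ ((j : ℕ) - 2) * X 2
        else X 0 ^ (d + 3 - r) * X 1 * X 2 ^ (r - 4)) →
      Function.Injective F ∧ (∀ j, (F j).IsHomogeneous d) ∧
        ∃ c : Fin r → k, c ≠ 0 ∧
          (∑ j, c j • F j) ∈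
            Ideal.span {(X 0 + X 1 + X 2 : MvPolynomial (Fin 3) k)} := by
  intro F hF
  obtain ⟨m, rfl⟩ : ∃ m, r = m + 6 := ⟨r - 6, by omega⟩
  obtain ⟨e, rfl⟩ : ∃ e, d = m + 5 + e := ⟨d - (m + 5), by omega⟩
  subst hF
  have hmono : ∀ j : Fin (m + 6),
      (if (j : ℕ) = 0 then (X 0 ^ (m + 5 + e) : MvPolynomial (Fin 3) k)
        else if (j : ℕ) = 1 then X 1 ^ (m + 5 + e)
        else if (j : ℕ) = 2 then X 2 ^ (m + 5 + e)
        else if (j : ℕ) < m + 6 - 1 then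
          X 0 ^ (m + 5 + e - 2 - ((j : ℕ) - 3)) * X 1 ^ ((j : ℕ) - 2) * X 2
        else X 0 ^ (m + 5 + e + 3 - (m + 6)) * X 1 * X 2 ^ (m + 6 - 4))
      = monomial
        (if (j : ℕ) = 0 then Finsupp.single (0 : Fin 3) (m + 5 + e)
          else if (j : ℕ) = 1 then Finsupp.single 1 (m + 5 + e)
          else if (j : ℕ) = 2 then Finsupp.single 2 (m + 5 + e)
          else if (j : ℕ) < m + 6 - 1 then
            Finsupp.single 0 (m + 5 + e - 2 - ((j : ℕ) - 3)) + Finsupp.single 1 ((j : ℕ) - 2)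
              + Finsupp.single 2 1
          else Finsupp.single 0 (m + 5 + e + 3 - (m + 6)) + Finsupp.single 1 1
              + Finsupp.single 2 (m + 6 - 4)) 1 := by
    intro j
    split_ifs with h0 h1 h2 h3
    · rw [X_pow_eq_monomial]
    · rw [X_pow_eq_monomial]
    · rw [X_pow_eq_monomial]
    · rw [← pow_one (X 2 : MvPolynomial (Fin 3) k)]
      simp only [X_pow_eq_monomial, monomial_mul, one_mul]
    · rw [← pow_one (X 1 : MvPolynomial (Fin 3) k)]
      simp only [X_pow_eq_monomial, monomial_mul, one_mul]
  refine ⟨?_, ?_, ?_⟩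
  · -- injectivity
    intro a b hab
    simp only [hmono a, hmono b] at hab
    have huv := monomial_left_injective (one_ne_zero (α := k)) hab
    have h1 := DFunLike.congr_fun huv 1
    have h2 := DFunLike.congr_fun huv 2
    have ha3 : (a : ℕ) < m + 6 := a.isLt
    have hb3 : (b : ℕ) < m + 6 := b.isLt
    simp only [apply_ite (fun f : Fin 3 →₀ ℕ => f 1), apply_ite (fun f : Fin 3 →₀ ℕ => f 2),
      Finsupp.add_apply, Finsupp.single_eq_same,
      Finsupp.single_eq_of_ne' (show (0 : Fin 3) ≠ 1 by decide),
      Finsupp.single_eq_of_ne' (show (0 : Fin 3) ≠ 2 by decide),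
      Finsupp.single_eq_of_ne' (show (2 : Fin 3) ≠ 1 by decide),
      Finsupp.single_eq_of_ne' (show (1 : Fin 3) ≠ 2 by decide), add_zero, zero_add] at h1 h2
    apply Fin.ext
    split_ifs at h1 h2 <;> omega
  · -- homogeneity
    intro j
    have hX : ∀ (i : Fin 3) (a : ℕ), (X i ^ a : MvPolynomial (Fin 3) k).IsHomogeneous a := by
      intro i a
      simpa using (isHomogeneous_X k i).pow a
    dsimp only
    split_ifs with h0 h1 h2 h3
    · exact hX 0 _
    · exact hX 1 _
    · exact hX 2 _
    · have := ((hX 0 (m + 5 + e - 2 - ((j : ℕ) - 3))).mul (hX 1 ((j : ℕ) - 2))).mul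
        ((pow_one (X 2 : MvPolynomial (Fin 3) k)) ▸ hX 2 1)
      have hdeg : m + 5 + e - 2 - ((j : ℕ) - 3) + ((j : ℕ) - 2) + 1 = m + 5 + e := by omega
      rwa [hdeg] at this
    · have := ((hX 0 (m + 5 + e + 3 - (m + 6))).mul
        ((pow_one (X 1 : MvPolynomial (Fin 3) k)) ▸ hX 1 1)).mul (hX 2 (m + 6 - 4))
      have hdeg : m + 5 + e + 3 - (m + 6) + 1 + (m + 6 - 4) = m + 5 + e := by omega
      rwa [hdeg] at this
  · -- the syzygy
    refine ⟨fun j => if (j : ℕ) < 3 then 0 else if (j : ℕ) = m + 5 then 1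
      else (-1 : k) ^ m * ((m + 1).choose ((j : ℕ) - 3)), ?_, ?_⟩
    · intro hc
      have := congrFun hc ⟨m + 5, by omega⟩
      norm_num at this
    · rw [Ideal.mem_span_singleton]
      have hrange : (Finset.range (m + 6)).sum
          (fun n => (if n < 3 then (0 : k) else if n = m + 5 then 1
            else (-1 : k) ^ m * ((m + 1).choose (n - 3))) •
            (if n = 0 then (X 0 ^ (m + 5 + e) : MvPolynomial (Fin 3) k)
              else if n = 1 then X 1 ^ (m + 5 + e)
              else if n = 2 then X 2 ^ (m + 5 + e)
              else if n < m + 6 - 1 then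
                X 0 ^ (m + 5 + e - 2 - (n - 3)) * X 1 ^ (n - 2) * X 2
              else X 0 ^ (m + 5 + e + 3 - (m + 6)) * X 1 * X 2 ^ (m + 6 - 4)))
          = (X 0 ^ (e + 2) * X 1 * X 2) *
            ((X 2 : MvPolynomial (Fin 3) k) ^ (m + 1) - (-(X 0 + X 1)) ^ (m + 1)) := by
        set G : ℕ → MvPolynomial (Fin 3) k := fun n =>
          (if n < 3 then (0 : k) else if n = m + 5 then 1
            else (-1 : k) ^ m * ((m + 1).choose (n - 3))) •
            (if n = 0 then (X 0 ^ (m + 5 + e) : MvPolynomial (Fin 3) k)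
              else if n = 1 then X 1 ^ (m + 5 + e)
              else if n = 2 then X 2 ^ (m + 5 + e)
              else if n < m + 6 - 1 then
                X 0 ^ (m + 5 + e - 2 - (n - 3)) * X 1 ^ (n - 2) * X 2
              else X 0 ^ (m + 5 + e + 3 - (m + 6)) * X 1 * X 2 ^ (m + 6 - 4)) with hG
        have h03 : ∑ n ∈ Finset.range 3, G n = 0 := by
          rw [Finset.sum_range_succ, Finset.sum_range_succ, Finset.sum_range_one, hG]
          norm_num
        have hmid : ∀ i ∈ Finset.range (m + 2), G (3 + i) =
            (-1 : MvPolynomial (Fin 3) k) ^ m * ((X 0 ^ (e + 2) * X 1 * X 2) *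
              (X 1 ^ i * X 0 ^ (m + 1 - i) * ((m + 1).choose i : MvPolynomial (Fin 3) k))) := by
          intro i hi
          have hi' : i < m + 2 := Finset.mem_range.mp hi
          rw [hG]
          simp only
          split_ifs <;> try (exfalso; omega)
          rw [show m + 5 + e - 2 - (3 + i - 3) = e + 2 + (m + 1 - i) from by omega,
            show 3 + i - 2 = i + 1 from by omega, show 3 + i - 3 = i from by omega,
            smul_eq_C_mul, map_mul, map_pow, map_neg, map_one, C_eq_coe_nat]
          ring
        have hlast : (if 3 + (m + 2) < 3 then (0 : k) else if 3 + (m + 2) = m + 5 then 1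
            else (-1 : k) ^ m * ((m + 1).choose (3 + (m + 2) - 3))) •
            (if 3 + (m + 2) = 0 then (X 0 ^ (m + 5 + e) : MvPolynomial (Fin 3) k)
              else if 3 + (m + 2) = 1 then X 1 ^ (m + 5 + e)
              else if 3 + (m + 2) = 2 then X 2 ^ (m + 5 + e)
              else if 3 + (m + 2) < m + 6 - 1 then
                X 0 ^ (m + 5 + e - 2 - (3 + (m + 2) - 3)) * X 1 ^ (3 + (m + 2) - 2) * X 2
              else X 0 ^ (m + 5 + e + 3 - (m + 6)) * X 1 * X 2 ^ (m + 6 - 4))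
            = X 0 ^ (e + 2) * X 1 * X 2 ^ (m + 2) := by
          split_ifs <;> try (exfalso; omega)
          rw [show m + 5 + e + 3 - (m + 6) = e + 2 from by omega,
            show m + 6 - 4 = m + 2 from by omega, one_smul]
        have hbin : ∑ i ∈ Finset.range (m + 2),
            (X 1 ^ i * X 0 ^ (m + 1 - i) * ((m + 1).choose i : MvPolynomial (Fin 3) k))
            = (X 1 + X 0) ^ (m + 1) := by
          rw [add_pow]
        have hneg : (-(X 0 + X 1) : MvPolynomial (Fin 3) k) ^ (m + 1)
            = -((-1 : MvPolynomial (Fin 3) k) ^ m * (X 1 + X 0) ^ (m + 1)) := by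
          rw [show (-(X 0 + X 1) : MvPolynomial (Fin 3) k) = (-1) * (X 1 + X 0) from by ring,
            mul_pow, pow_succ]
          ring
        rw [show m + 6 = 3 + (m + 2) + 1 from by omega, Finset.sum_range_succ,
          Finset.sum_range_add, h03, Finset.sum_congr rfl hmid, hlast, ← Finset.mul_sum,
          ← Finset.mul_sum, hbin, hneg]
        ring
      have key : (∑ j : Fin (m + 6), (if (j : ℕ) < 3 then (0 : k) else if (j : ℕ) = m + 5 then 1
            else (-1 : k) ^ m * ((m + 1).choose ((j : ℕ) - 3))) •
            (if (j : ℕ) = 0 then (X 0 ^ (m + 5 + e) : MvPolynomial (Fin 3) k)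
              else if (j : ℕ) = 1 then X 1 ^ (m + 5 + e)
              else if (j : ℕ) = 2 then X 2 ^ (m + 5 + e)
              else if (j : ℕ) < m + 6 - 1 then
                X 0 ^ (m + 5 + e - 2 - ((j : ℕ) - 3)) * X 1 ^ ((j : ℕ) - 2) * X 2
              else X 0 ^ (m + 5 + e + 3 - (m + 6)) * X 1 * X 2 ^ (m + 6 - 4)))
          = (X 0 ^ (e + 2) * X 1 * X 2) *
            ((X 2 : MvPolynomial (Fin 3) k) ^ (m + 1) - (-(X 0 + X 1)) ^ (m + 1)) :=
        (Fin.sum_univ_eq_sum_range _ _).trans hrange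
      rw [key]
      have h1 : ((X 2 : MvPolynomial (Fin 3) k) - (-(X 0 + X 1))) ∣
          (X 2 : MvPolynomial (Fin 3) k) ^ (m + 1) - (-(X 0 + X 1)) ^ (m + 1) :=
        sub_dvd_pow_sub_pow _ _ _
      have h2 : (X 0 + X 1 + X 2 : MvPolynomial (Fin 3) k) = X 2 - (-(X 0 + X 1)) := by ring
      rw [h2]
      exact Dvd.dvd.mul_left h1 _
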